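/- For d = 3 and p a probability vector sorted non-increasingly, the three tangent vectors t^{(n)} = (t_1^{(n)}, p_n, ..., p_n, t_d^{(n)}) with t_1^{(n)} = ∑_{i<n} p_i − (n−2)p_n and t_d^{(n)} = 1 − t_1^{(n)} − (d−2)p_n are each quasi-probability vectors summing to 1 that majorise p (when their entries are nonnegative), and each t^{(n)} agrees with p in exactly the n-th partial sum: ∑_{i=1}^n t_i^{(n)} = ∑_{i=1}^n p_i, while ∑_{i=1}^k t_i^{(n)} ≥ ∑_{i=1}^k p_i for all k. -/

import Mathlib

open Finset

/-- The sum of the `k` largest entries of `p` (as a supremum over subsets of size `k`). -/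
noncomputable def sumLargest {ι : Type*} [Fintype ι] (p : ι → ℝ) (k : ℕ) : ℝ :=
  sSup {x : ℝ | ∃ s : Finset ι, s.card = k ∧ ∑ i ∈ s, p i = x}

/-- `p` majorises `q`: for every `k`, the sum of the `k` largest entries of `p`
is at least the sum of the `k` largest entries of `q`. -/
def Majorizes {ι : Type*} [Fintype ι] (p q : ι → ℝ) : Prop :=
  ∀ k : ℕ, k ≤ Fintype.card ι → sumLargest q k ≤ sumLargest p k

/-- A probability vector: nonnegative entries summing to 1. -/
def IsProbVec {ι : Type*} [Fintype ι] (p : ι → ℝ) : Prop :=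
  (∀ i, 0 ≤ p i) ∧ ∑ i, p i = 1

@[simp] lemma fin3_mk0 (h : 0 < 3) : (⟨0, h⟩ : Fin 3) = 0 := rfl
@[simp] lemma fin3_mk1 (h : 1 < 3) : (⟨1, h⟩ : Fin 3) = 1 := rfl
@[simp] lemma fin3_mk2 (h : 2 < 3) : (⟨2, h⟩ : Fin 3) = 2 := rfl

lemma sumLargest_bddAbove {ι : Type*} [Fintype ι] (p : ι → ℝ) (k : ℕ) :
    BddAbove {x : ℝ | ∃ s : Finset ι, s.card = k ∧ ∑ i ∈ s, p i = x} := by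
  classical
  apply Set.Finite.bddAbove
  apply Set.Finite.subset (Set.finite_range fun s : Finset ι => ∑ i ∈ s, p i)
  rintro x ⟨s, -, rfl⟩
  exact ⟨s, rfl⟩

lemma le_sumLargest {ι : Type*} [Fintype ι] (p : ι → ℝ) (s : Finset ι) :
    ∑ i ∈ s, p i ≤ sumLargest p s.card :=
  le_csSup (sumLargest_bddAbove p _) ⟨s, rfl, rfl⟩

lemma sumLargest_le {ι : Type*} [Fintype ι] (p : ι → ℝ) (k : ℕ)
    (hk : k ≤ Fintype.card ι) (c : ℝ)
    (h : ∀ s : Finset ι, s.card = k → ∑ i ∈ s, p i ≤ c) : sumLargest p k ≤ c := by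
  obtain ⟨s, -, hs⟩ := Finset.exists_subset_card_eq (s := (Finset.univ : Finset ι)) (n := k)
    (by simpa using hk)
  exact csSup_le ⟨_, s, hs, rfl⟩ (by rintro x ⟨s, hsk, rfl⟩; exact h s hsk)

/-- For `d = 3` and a non-increasingly sorted probability vector `p`, the tangent
vectors `t⁽ⁿ⁾` (for `n = m+1`, `m : Fin 3`) sum to 1, agree with `p` in the `n`-th
partial sum, dominate all partial sums of `p`, and majorise `p` whenever their
entries are nonnegative. -/
theorem tangent_vectors_d3 (p : Fin 3 → ℝ) (hp : IsProbVec p) (hsorted : Antitone p)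
    (m : Fin 3) :
    let t : Fin 3 → ℝ :=
      ![(∑ i ∈ Finset.univ.filter fun i => i < m, p i) - ((m : ℕ) - 1 : ℝ) * p m,
        p m,
        1 - ((∑ i ∈ Finset.univ.filter fun i => i < m, p i) - ((m : ℕ) - 1 : ℝ) * p m) - p m]
    (∑ i, t i = 1) ∧
    (∑ i ∈ Finset.univ.filter fun i : Fin 3 => i ≤ m, t i =
      ∑ i ∈ Finset.univ.filter fun i : Fin 3 => i ≤ m, p i) ∧
    (∀ k : ℕ, k ≤ 3 →
      ∑ i ∈ Finset.univ.filter fun i : Fin 3 => (i : ℕ) < k, p i ≤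
        ∑ i ∈ Finset.univ.filter fun i : Fin 3 => (i : ℕ) < k, t i) ∧
    ((∀ i, 0 ≤ t i) → Majorizes t p) := by
  intro t
  have h01 : p 1 ≤ p 0 := hsorted (by decide)
  have h12 : p 2 ≤ p 1 := hsorted (by decide)
  have hsum : p 0 + p 1 + p 2 = 1 := by
    have := hp.2; rwa [Fin.sum_univ_three] at this
  have ht0 : t 0 = (∑ i ∈ Finset.univ.filter fun i => i < m, p i) - ((m : ℕ) - 1 : ℝ) * p m := rfl
  have ht1 : t 1 = p m := rfl
  have ht2 : t 2 = 1 - t 0 - p m := rfl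
  have htot : ∑ i, t i = 1 := by
    rw [Fin.sum_univ_three, ht0, ht1, ht2, ht0]; ring
  have hpart : ∀ k : ℕ, k ≤ 3 →
      ∑ i ∈ Finset.univ.filter fun i : Fin 3 => (i : ℕ) < k, p i ≤
        ∑ i ∈ Finset.univ.filter fun i : Fin 3 => (i : ℕ) < k, t i := by
    intro k hk
    have e0 : t 0 = (∑ i ∈ Finset.univ.filter fun i => i < m, p i) - ((m : ℕ) - 1 : ℝ) * p m := rfl
    interval_cases k
    · simp
    · fin_cases m <;>
        simp only [Finset.sum_filter, Fin.sum_univ_three, e0, ht1, ht2] <;>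
        norm_num [Fin.lt_def, Fin.le_def, fin3_mk0, fin3_mk1, fin3_mk2] <;> linarith
    · fin_cases m <;>
        simp only [Finset.sum_filter, Fin.sum_univ_three, e0, ht1, ht2] <;>
        norm_num [Fin.lt_def, Fin.le_def, fin3_mk0, fin3_mk1, fin3_mk2] <;> linarith
    · fin_cases m <;>
        simp only [Finset.sum_filter, Fin.sum_univ_three, e0, ht1, ht2] <;>
        norm_num [Fin.lt_def, Fin.le_def, fin3_mk0, fin3_mk1, fin3_mk2] <;> linarith
  refine ⟨htot, ?_, hpart, ?_⟩
  · fin_cases m <;>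
      simp only [Finset.sum_filter, Fin.sum_univ_three, ht0, ht1, ht2] <;>
      norm_num [Fin.lt_def, Fin.le_def, fin3_mk0, fin3_mk1, fin3_mk2, Fin.ext_iff] <;> linarith
  · intro _ k hk
    have hk3 : k ≤ 3 := by simpa using hk
    apply sumLargest_le p k hk (sumLargest t k)
    intro s hs
    have hcard : (Finset.univ.filter fun i : Fin 3 => (i : ℕ) < k).card = k := by
      interval_cases k <;> decide
    have hle2 : ∑ i ∈ Finset.univ.filter fun i : Fin 3 => (i : ℕ) < k, t i ≤ sumLargest t k := by
      have := le_sumLargest t (Finset.univ.filter fun i : Fin 3 => (i : ℕ) < k)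
      rwa [hcard] at this
    have hle1 : ∑ i ∈ s, p i ≤ ∑ i ∈ Finset.univ.filter fun i : Fin 3 => (i : ℕ) < k, p i := by
      interval_cases k
      · simp [Finset.card_eq_zero.mp hs]
      · obtain ⟨i, rfl⟩ := Finset.card_eq_one.mp hs
        simp only [Finset.sum_singleton, Finset.sum_filter, Fin.sum_univ_three]
        norm_num [Fin.lt_def, Fin.le_def, fin3_mk0, fin3_mk1, fin3_mk2]
        fin_cases i <;> simp <;> linarith
      · have hc : sᶜ.card = 1 := by
          rw [Finset.card_compl, hs]; rfl
        obtain ⟨j, hj⟩ := Finset.card_eq_one.mp hc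
        have hsplit : ∑ i ∈ s, p i + ∑ i ∈ sᶜ, p i = ∑ i, p i := Finset.sum_add_sum_compl s p
        rw [hj, Finset.sum_singleton, hp.2] at hsplit
        simp only [Finset.sum_filter, Fin.sum_univ_three]
        norm_num [Fin.lt_def, Fin.le_def, fin3_mk0, fin3_mk1, fin3_mk2]
        fin_cases j <;> simp at hsplit <;> linarith
      · have : s = Finset.univ := Finset.eq_univ_of_card s hs
        rw [this]
        apply Finset.sum_le_sum_of_subset_of_nonneg
        · intro i _; simp
        · intro i _ _; exact hp.1 i
    exact hle1.trans ((hpart k hk3).trans hle2)
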